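/- On designs, the observational preorder decomposes: if phi1 ⊑ phi2, then there exists phi with phi1 ≤L phi ≤R phi2, where ≤R is derivability without the axiom phi ⊑ daimon and ≤L is derivability without the axiom Omega ⊑ phi. -/
import Mathlib


/-! Designs of ludics, as (possibly infinitely branching) trees of alternating
positive actions `(+, ξ, I)` and negative actions `(-, ζ, J)`, with leaves
`Ω` (the partial design) and the daimon `✠`. Addresses (loci) are lists of
natural numbers (biases). -/

mutual
  inductive PosDesign : Type
    | omega : PosDesign
    | daimon : PosDesign
    | pos : List ℕ → Finset ℕ → (ℕ → NegDesign) → PosDesign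
  inductive NegDesign : Type
    | neg : (Finset ℕ → PosDesign) → NegDesign
end

def NegDesign.app : NegDesign → Finset ℕ → PosDesign
  | .neg f, J => f J

/-! The order `⊑` on designs, generated by `Ω ⊑ φ`, `φ ⊑ ✠`, congruence,
reflexivity and transitivity.  The two boolean parameters state whether the
axiom `Ω ⊑ φ` (resp. `φ ⊑ ✠`) is allowed: `LeP true true` is the observational
order `⊑`, `LeP false true` is `≤L`, and `LeP true false` is `≤R` (the stable
order). -/

mutual
  inductive LeP (o d : Bool) : PosDesign → PosDesign → Prop
    | omega (φ : PosDesign) (h : o = true) : LeP o d .omega φ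
    | daimon (φ : PosDesign) (h : d = true) : LeP o d φ .daimon
    | refl (φ : PosDesign) : LeP o d φ φ
    | trans {φ₁ φ₂ φ₃ : PosDesign} :
        LeP o d φ₁ φ₂ → LeP o d φ₂ φ₃ → LeP o d φ₁ φ₃
    | pos (ξ : List ℕ) (I : Finset ℕ) (k k' : ℕ → NegDesign)
        (h : ∀ i ∈ I, LeN o d (k i) (k' i)) : LeP o d (.pos ξ I k) (.pos ξ I k')
  inductive LeN (o d : Bool) : NegDesign → NegDesign → Prop
    | neg (f f' : Finset ℕ → PosDesign)
        (h : ∀ J, LeP o d (f J) (f' J)) : LeN o d (.neg f) (.neg f')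
end

/-- A non-mutual semantic characterization of the order. -/
inductive SLeP (o d : Bool) : PosDesign → PosDesign → Prop
  | omega (φ : PosDesign) (h : o = true) : SLeP o d .omega φ
  | daimon (φ : PosDesign) (h : d = true) : SLeP o d φ .daimon
  | oo : SLeP o d .omega .omega
  | dd : SLeP o d .daimon .daimon
  | pos (ξ : List ℕ) (I : Finset ℕ) (k k' : ℕ → NegDesign)
      (h : ∀ i ∈ I, ∀ J, SLeP o d ((k i).app J) ((k' i).app J)) :
      SLeP o d (.pos ξ I k) (.pos ξ I k')

mutual
  theorem SLeP.refl (o d : Bool) : ∀ φ, SLeP o d φ φ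
    | .omega => .oo
    | .daimon => .dd
    | .pos ξ I k => .pos ξ I k k (fun i _ J => SLeN_refl o d (k i) J)
  theorem SLeN_refl (o d : Bool) : ∀ n J, SLeP o d (NegDesign.app n J) (NegDesign.app n J)
    | .neg f, J => SLeP.refl o d (f J)
end

theorem SLeP.trans {o d : Bool} {φ₁ φ₂ φ₃ : PosDesign}
    (h1 : SLeP o d φ₁ φ₂) (h2 : SLeP o d φ₂ φ₃) : SLeP o d φ₁ φ₃ := by
  induction h1 generalizing φ₃ with
  | omega φ h => exact .omega _ h
  | daimon φ h =>
      cases h2 with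
      | daimon _ h' => exact .daimon _ h'
      | dd => exact .daimon _ h
  | oo => exact h2
  | dd => exact h2
  | pos ξ I k k' h ih =>
      cases h2 with
      | daimon _ h' => exact .daimon _ h'
      | pos _ _ _ k'' h' =>
          exact .pos ξ I k k'' (fun i hi J => ih i hi J (h' i hi J))

theorem LeP.toS {o d : Bool} {φ₁ φ₂ : PosDesign} (h : LeP o d φ₁ φ₂) :
    SLeP o d φ₁ φ₂ := by
  induction h using LeP.rec
    (motive_2 := fun n n' _ => ∀ J, SLeP o d (n.app J) (n'.app J)) with
  | omega φ h => exact .omega φ h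
  | daimon φ h => exact .daimon φ h
  | refl φ => exact SLeP.refl o d φ
  | trans _ _ ih1 ih2 => exact ih1.trans ih2
  | pos ξ I k k' h ih => exact .pos ξ I k k' ih
  | neg f f' h ih => exact ih _

theorem SLeP.toLe {o d : Bool} {φ₁ φ₂ : PosDesign} (h : SLeP o d φ₁ φ₂) :
    LeP o d φ₁ φ₂ := by
  induction h with
  | omega φ h => exact .omega φ h
  | daimon φ h => exact .daimon φ h
  | oo => exact .refl _
  | dd => exact .refl _
  | pos ξ I k k' h ih =>
      refine .pos ξ I k k' (fun i hi => ?_)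
      cases hk : k i with
      | neg f =>
          cases hk' : k' i with
          | neg f' =>
              refine LeN.neg f f' (fun J => ?_)
              have := ih i hi J
              rw [hk, hk'] at this
              exact this

theorem SLeP.decomp {φ₁ φ₂ : PosDesign} (h : SLeP true true φ₁ φ₂) :
    ∃ φ, SLeP false true φ₁ φ ∧ SLeP true false φ φ₂ := by
  induction h with
  | omega φ _ => exact ⟨.omega, .oo, .omega φ rfl⟩
  | daimon φ _ => exact ⟨.daimon, .daimon _ rfl, .dd⟩
  | oo => exact ⟨.omega, .oo, .oo⟩
  | dd => exact ⟨.daimon, .dd, .dd⟩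
  | pos ξ I k k' h ih =>
      classical
      refine ⟨.pos ξ I (fun i => .neg (fun J =>
        if hi : i ∈ I then (ih i hi J).choose else (k i).app J)), ?_, ?_⟩
      · refine .pos ξ I _ _ (fun i hi J => ?_)
        simp only [NegDesign.app, dif_pos hi]
        exact (ih i hi J).choose_spec.1
      · refine .pos ξ I _ _ (fun i hi J => ?_)
        simp only [NegDesign.app, dif_pos hi]
        exact (ih i hi J).choose_spec.2

/-- decomposition of the observational order on designs: if
`φ₁ ⊑ φ₂` then there is a design `φ` with `φ₁ ≤L φ ≤R φ₂`. -/
theorem observational_order_decomposition (φ₁ φ₂ : PosDesign)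
    (h : LeP true true φ₁ φ₂) :
    ∃ φ, LeP false true φ₁ φ ∧ LeP true false φ φ₂ := by
  obtain ⟨φ, h1, h2⟩ := h.toS.decomp
  exact ⟨φ, h1.toLe, h2.toLe⟩
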